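/- arXiv:1303.6376 — 5 statements merged into one kernel-verified Lean document; each statement's English description precedes it below -/
import Mathlib

section
/- For every q ∈ ℂ with |q| < 1: Σ_{(m,n)∈ℤ², m≡1, n≡1 (mod 6)} ((m+3n)/4)·q^{(m²+3n²)/4} = Σ_{(m,n)∈ℤ², (m,n)≡(1,0) or (−2,3) (mod 6)} (m+3n)·q^{m²+3n²} + Σ_{(m,n)∈ℤ², (m,n)≡(2,−1) or (−1,2) (mod 6)} ((m+3n)/2)·q^{m²+3n²}. -/
open Complex

lemma aux_summable_nat {t : ℝ} (h0 : 0 ≤ t) (h1 : t < 1) :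
    Summable (fun n : ℕ => (1 + (n : ℝ)) * t ^ n) := by
  have h2 : Summable (fun n : ℕ => t ^ n) := summable_geometric_of_lt_one h0 h1
  have h3 : Summable (fun n : ℕ => (n : ℝ) ^ 1 * t ^ n) :=
    summable_pow_mul_geometric_of_norm_lt_one 1
      (by rwa [Real.norm_eq_abs, _root_.abs_of_nonneg h0])
  have := h2.add h3
  refine this.congr fun n => ?_
  ring

lemma aux_summable_int {t : ℝ} (h0 : 0 ≤ t) (h1 : t < 1) :
    Summable (fun m : ℤ => (1 + (m.natAbs : ℝ)) * t ^ m.natAbs) := by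
  apply Summable.of_nat_of_neg
  · simpa using aux_summable_nat h0 h1
  · simpa using aux_summable_nat h0 h1

lemma aux_summable_prod {t : ℝ} (h0 : 0 ≤ t) (h1 : t < 1) :
    Summable (fun p : ℤ × ℤ =>
      ((1 + (p.1.natAbs : ℝ)) * t ^ p.1.natAbs) * ((1 + (p.2.natAbs : ℝ)) * t ^ p.2.natAbs)) :=
  (aux_summable_int h0 h1).mul_of_nonneg (aux_summable_int h0 h1)
    (fun m => by positivity) (fun m => by positivity)

lemma aux_master {q : ℂ} (hq : ‖q‖ < 1) (P : ℤ × ℤ → Prop)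
    (c : ℤ × ℤ → ℂ) (N : ℤ × ℤ → ℤ)
    (hc : ∀ p : ℤ × ℤ, ‖c p‖ ≤ ((p.1.natAbs : ℝ) + 3 * p.2.natAbs))
    (hN0 : ∀ p : ℤ × ℤ, 0 ≤ N p)
    (hN : ∀ p : ℤ × ℤ, (p.1.natAbs : ℤ) + p.2.natAbs - 2 ≤ N p) :
    Summable (fun x : {p : ℤ × ℤ // P p} => c x.1 * q ^ (N x.1)) := by
  set t : ℝ := (‖q‖ + 1) / 2 with ht
  have ht0 : 0 < t := by positivity
  have ht1 : t < 1 := by rw [ht]; linarith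
  have hqt : ‖q‖ ≤ t := by rw [ht]; linarith
  apply Summable.of_norm_bounded (g := fun x : {p : ℤ × ℤ // P p} =>
    (3 / t ^ 2) * (((1 + (x.1.1.natAbs : ℝ)) * t ^ x.1.1.natAbs) *
      ((1 + (x.1.2.natAbs : ℝ)) * t ^ x.1.2.natAbs)))
  · exact ((aux_summable_prod ht0.le ht1).mul_left _).subtype _
  · rintro ⟨⟨m, n⟩, hP⟩
    have h1 : ‖c (m, n) * q ^ N (m, n)‖
        = ‖c (m, n)‖ * ‖q‖ ^ N (m, n) := by
      rw [norm_mul, norm_zpow]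
    have h2 : ‖q‖ ^ N (m, n) ≤ t ^ N (m, n) := by
      rw [← Int.toNat_of_nonneg (hN0 (m, n)), zpow_natCast, zpow_natCast]
      exact pow_le_pow_left₀ (norm_nonneg q) hqt _
    have h4 : t ^ N (m, n) ≤ t ^ ((m.natAbs : ℤ) + n.natAbs - 2) :=
      zpow_le_zpow_right_of_le_one₀ ht0 ht1.le (hN (m, n))
    have h5 : t ^ ((m.natAbs : ℤ) + n.natAbs - 2) = t ^ m.natAbs * t ^ n.natAbs / t ^ 2 := by
      rw [zpow_sub₀ ht0.ne', zpow_add₀ ht0.ne', zpow_natCast, zpow_natCast,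
        show ((2:ℤ)) = ((2:ℕ):ℤ) by norm_num, zpow_natCast]
    have h6 : ‖c (m, n)‖ ≤ (m.natAbs : ℝ) + 3 * n.natAbs := hc (m, n)
    have hq0 : (0 : ℝ) ≤ ‖q‖ ^ N (m, n) := zpow_nonneg (norm_nonneg q) _
    have h7 : ‖q‖ ^ N (m, n) ≤ t ^ m.natAbs * t ^ n.natAbs / t ^ 2 := by
      rw [← h5]; exact h2.trans h4
    rw [h1]
    have hA : (0 : ℝ) ≤ (m.natAbs : ℝ) + 3 * n.natAbs := by positivity
    calc ‖c (m, n)‖ * ‖q‖ ^ N (m, n)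
        ≤ ((m.natAbs : ℝ) + 3 * n.natAbs) * (t ^ m.natAbs * t ^ n.natAbs / t ^ 2) :=
          mul_le_mul h6 h7 hq0 hA
      _ ≤ (3 * ((1 + (m.natAbs : ℝ)) * (1 + (n.natAbs : ℝ)))) *
            (t ^ m.natAbs * t ^ n.natAbs / t ^ 2) := by
          apply mul_le_mul_of_nonneg_right _ (by positivity)
          nlinarith [Nat.cast_nonneg (α := ℝ) m.natAbs, Nat.cast_nonneg (α := ℝ) n.natAbs]
      _ = (3 / t ^ 2) * (((1 + (m.natAbs : ℝ)) * t ^ m.natAbs) *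
            ((1 + (n.natAbs : ℝ)) * t ^ n.natAbs)) := by
          field_simp

lemma aux_natAbs_bound (m n : ℤ) : (m.natAbs : ℤ) + n.natAbs - 2 ≤ m ^ 2 + 3 * n ^ 2 := by
  have h1 : (m.natAbs : ℤ) ^ 2 = m ^ 2 := by
    rw [Int.natAbs_sq]
  have h2 : (n.natAbs : ℤ) ^ 2 = n ^ 2 := by
    rw [Int.natAbs_sq]
  nlinarith [sq_nonneg ((m.natAbs : ℤ) - 1), sq_nonneg ((n.natAbs : ℤ) - 1),
    sq_nonneg ((n.natAbs : ℤ))]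

lemma aux_natAbs_bound_div (m n : ℤ) :
    (m.natAbs : ℤ) + n.natAbs - 2 ≤ (m ^ 2 + 3 * n ^ 2) / 4 := by
  have h1 : (m.natAbs : ℤ) ^ 2 = m ^ 2 := by
    rw [Int.natAbs_sq]
  have h2 : (n.natAbs : ℤ) ^ 2 = n ^ 2 := by
    rw [Int.natAbs_sq]
  rw [Int.le_ediv_iff_mul_le (by norm_num : (0:ℤ) < 4)]
  nlinarith [sq_nonneg ((m.natAbs : ℤ) - 2), sq_nonneg ((n.natAbs : ℤ) - 2),
    sq_nonneg ((n.natAbs : ℤ))]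

theorem stmt8 (q : ℂ) (hq : ‖q‖ < 1) :
    (∑' p : {p : ℤ × ℤ // Int.ModEq 6 p.1 1 ∧ Int.ModEq 6 p.2 1},
        (((p.1.1 : ℂ) + 3 * (p.1.2 : ℂ)) / 4) * q ^ ((p.1.1 ^ 2 + 3 * p.1.2 ^ 2) / 4)) =
      (∑' p : {p : ℤ × ℤ // (Int.ModEq 6 p.1 1 ∧ Int.ModEq 6 p.2 0) ∨
                            (Int.ModEq 6 p.1 (-2) ∧ Int.ModEq 6 p.2 3)},
        ((p.1.1 : ℂ) + 3 * (p.1.2 : ℂ)) * q ^ (p.1.1 ^ 2 + 3 * p.1.2 ^ 2)) +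
      (∑' p : {p : ℤ × ℤ // (Int.ModEq 6 p.1 2 ∧ Int.ModEq 6 p.2 (-1)) ∨
                            (Int.ModEq 6 p.1 (-1) ∧ Int.ModEq 6 p.2 2)},
        (((p.1.1 : ℂ) + 3 * (p.1.2 : ℂ)) / 2) * q ^ (p.1.1 ^ 2 + 3 * p.1.2 ^ 2)) := by
  classical
  set A : ℤ × ℤ → Prop := fun p => Int.ModEq 6 p.1 1 ∧ Int.ModEq 6 p.2 1 with hA_def
  set B1 : ℤ × ℤ → Prop := fun p => (Int.ModEq 6 p.1 1 ∧ Int.ModEq 6 p.2 0) ∨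
      (Int.ModEq 6 p.1 (-2) ∧ Int.ModEq 6 p.2 3) with hB1_def
  set B2 : ℤ × ℤ → Prop := fun p => (Int.ModEq 6 p.1 2 ∧ Int.ModEq 6 p.2 (-1)) ∨
      (Int.ModEq 6 p.1 (-1) ∧ Int.ModEq 6 p.2 2) with hB2_def
  set f : ℤ × ℤ → ℂ := fun p =>
    (((p.1 : ℂ) + 3 * (p.2 : ℂ)) / 4) * q ^ ((p.1 ^ 2 + 3 * p.2 ^ 2) / 4) with hf_def
  -- summability of the A-indexed family
  have habs : ∀ m : ℤ, ‖((m : ℂ))‖ = (m.natAbs : ℝ) := by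
    intro m
    rw [Complex.norm_intCast, Nat.cast_natAbs, ← Int.cast_abs]
  have hA_sum : Summable (fun x : {p : ℤ × ℤ // A p} => f x.1) := by
    apply aux_master hq A (fun p => ((p.1 : ℂ) + 3 * (p.2 : ℂ)) / 4)
      (fun p => (p.1 ^ 2 + 3 * p.2 ^ 2) / 4)
    · rintro ⟨m, n⟩
      have h1 : ‖(((m : ℂ) + 3 * (n : ℂ)) / 4)‖
          = ‖((m : ℂ) + 3 * (n : ℂ))‖ / 4 := by
        rw [norm_div]
        norm_num [RCLike.norm_ofNat]
      rw [h1]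
      have h2 : ‖((m : ℂ) + 3 * (n : ℂ))‖ ≤ (m.natAbs : ℝ) + 3 * n.natAbs := by
        calc ‖((m : ℂ) + 3 * (n : ℂ))‖
            ≤ ‖((m : ℂ))‖ + ‖(3 * (n : ℂ))‖ := norm_add_le _ _
          _ = (m.natAbs : ℝ) + 3 * n.natAbs := by
              rw [norm_mul, habs m, habs n]
              norm_num [RCLike.norm_ofNat]
      have h3 : (0:ℝ) ≤ (m.natAbs : ℝ) + 3 * n.natAbs := by positivity
      linarith
    · rintro ⟨m, n⟩
      exact Int.ediv_nonneg (by positivity) (by norm_num)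
    · rintro ⟨m, n⟩
      exact aux_natAbs_bound_div m n
  -- the splitting set
  set s : Set {p : ℤ × ℤ // A p} := {x | 4 ∣ x.1.1 - x.1.2} with hs_def
  have hsplit := hA_sum.tsum_subtype_add_tsum_subtype_compl s
  -- Equivalence B1 ≃ s
  have hB1F : ∀ b : {p : ℤ × ℤ // B1 p}, A (b.1.1 + 3 * b.1.2, b.1.1 - b.1.2) := by
    rintro ⟨⟨u, v⟩, hb⟩
    simp only [hB1_def, hA_def, Int.ModEq] at hb ⊢
    omega
  have hB1S : ∀ b : {p : ℤ × ℤ // B1 p},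
      (⟨(b.1.1 + 3 * b.1.2, b.1.1 - b.1.2), hB1F b⟩ : {p : ℤ × ℤ // A p}) ∈ s := by
    rintro ⟨⟨u, v⟩, hb⟩
    simp only [hs_def, Set.mem_setOf_eq]
    exact ⟨v, by ring⟩
  let F1 : {p : ℤ × ℤ // B1 p} → ↥s := fun b => ⟨⟨_, hB1F b⟩, hB1S b⟩
  have hF1bij : Function.Bijective F1 := by
    constructor
    · rintro ⟨⟨u, v⟩, hx⟩ ⟨⟨u', v'⟩, hy⟩ h
      simp only [F1, Subtype.mk.injEq, Prod.mk.injEq] at h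
      simp only [Subtype.mk.injEq, Prod.mk.injEq]
      omega
    · rintro ⟨⟨⟨m, n⟩, hA'⟩, hs'⟩
      simp only [hs_def, Set.mem_setOf_eq] at hs'
      simp only [hA_def, Int.ModEq] at hA'
      refine ⟨⟨(n + (m - n) / 4, (m - n) / 4), ?_⟩, ?_⟩
      · simp only [hB1_def, Int.ModEq]
        omega
      · simp only [F1, Subtype.mk.injEq, Prod.mk.injEq]
        constructor <;> omega
  let E1 := Equiv.ofBijective F1 hF1bij
  -- Equivalence B2 ≃ sᶜ
  have hB2F : ∀ b : {p : ℤ × ℤ // B2 p}, A (3 * b.1.2 - b.1.1, b.1.1 + b.1.2) := by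
    rintro ⟨⟨u, v⟩, hb⟩
    simp only [hB2_def, hA_def, Int.ModEq] at hb ⊢
    omega
  have hB2S : ∀ b : {p : ℤ × ℤ // B2 p},
      (⟨(3 * b.1.2 - b.1.1, b.1.1 + b.1.2), hB2F b⟩ : {p : ℤ × ℤ // A p}) ∈ sᶜ := by
    rintro ⟨⟨u, v⟩, hb⟩
    simp only [hs_def, Set.mem_compl_iff, Set.mem_setOf_eq]
    simp only [hB2_def, Int.ModEq] at hb
    omega
  let F2 : {p : ℤ × ℤ // B2 p} → ↥sᶜ := fun b => ⟨⟨_, hB2F b⟩, hB2S b⟩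
  have hF2bij : Function.Bijective F2 := by
    constructor
    · rintro ⟨⟨u, v⟩, hx⟩ ⟨⟨u', v'⟩, hy⟩ h
      simp only [F2, Subtype.mk.injEq, Prod.mk.injEq] at h
      simp only [Subtype.mk.injEq, Prod.mk.injEq]
      omega
    · rintro ⟨⟨⟨m, n⟩, hA'⟩, hs'⟩
      simp only [hs_def, Set.mem_compl_iff, Set.mem_setOf_eq] at hs'
      simp only [hA_def, Int.ModEq] at hA'
      refine ⟨⟨(n - (m + n) / 4, (m + n) / 4), ?_⟩, ?_⟩
      · simp only [hB2_def, Int.ModEq]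
        omega
      · simp only [F2, Subtype.mk.injEq, Prod.mk.injEq]
        constructor <;> omega
  let E2 := Equiv.ofBijective F2 hF2bij
  -- summability of the two B1 families
  have hS2 : Summable (fun b : {p : ℤ × ℤ // B1 p} =>
      (b.1.1 : ℂ) * q ^ (b.1.1 ^ 2 + 3 * b.1.2 ^ 2)) := by
    apply aux_master hq B1 (fun p => (p.1 : ℂ)) (fun p => p.1 ^ 2 + 3 * p.2 ^ 2)
    · rintro ⟨m, n⟩
      rw [habs m]
      have : (0:ℝ) ≤ 3 * n.natAbs := by positivity
      linarith
    · rintro ⟨m, n⟩; positivity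
    · rintro ⟨m, n⟩; exact aux_natAbs_bound m n
  have hS3 : Summable (fun b : {p : ℤ × ℤ // B1 p} =>
      (3 * (b.1.2 : ℂ)) * q ^ (b.1.1 ^ 2 + 3 * b.1.2 ^ 2)) := by
    apply aux_master hq B1 (fun p => 3 * (p.2 : ℂ)) (fun p => p.1 ^ 2 + 3 * p.2 ^ 2)
    · rintro ⟨m, n⟩
      rw [norm_mul, habs n]
      have : (0:ℝ) ≤ (m.natAbs : ℝ) := by positivity
      have h3 : ‖(3:ℂ)‖ = 3 := by norm_num
      rw [h3]
      linarith
    · rintro ⟨m, n⟩; positivity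
    · rintro ⟨m, n⟩; exact aux_natAbs_bound m n
  -- the odd-part sum over B1 vanishes
  have hJinv : ∀ b : {p : ℤ × ℤ // B1 p}, B1 (b.1.1, -b.1.2) := by
    rintro ⟨⟨u, v⟩, hb⟩
    simp only [hB1_def, Int.ModEq] at hb ⊢
    omega
  let J : {p : ℤ × ℤ // B1 p} ≃ {p : ℤ × ℤ // B1 p} :=
    { toFun := fun b => ⟨(b.1.1, -b.1.2), hJinv b⟩
      invFun := fun b => ⟨(b.1.1, -b.1.2), hJinv b⟩
      left_inv := by rintro ⟨⟨u, v⟩, hb⟩; simp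
      right_inv := by rintro ⟨⟨u, v⟩, hb⟩; simp }
  have hzero : (∑' b : {p : ℤ × ℤ // B1 p},
      (3 * (b.1.2 : ℂ)) * q ^ (b.1.1 ^ 2 + 3 * b.1.2 ^ 2)) = 0 := by
    have hJeq := Equiv.tsum_eq J (fun b : {p : ℤ × ℤ // B1 p} =>
      (3 * (b.1.2 : ℂ)) * q ^ (b.1.1 ^ 2 + 3 * b.1.2 ^ 2))
    have h2 : (∑' b : {p : ℤ × ℤ // B1 p},
        (3 * (((J b).1.2 : ℤ) : ℂ)) * q ^ ((J b).1.1 ^ 2 + 3 * (J b).1.2 ^ 2))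
        = ∑' b : {p : ℤ × ℤ // B1 p},
          -((3 * (b.1.2 : ℂ)) * q ^ (b.1.1 ^ 2 + 3 * b.1.2 ^ 2)) := by
      apply tsum_congr
      rintro ⟨⟨u, v⟩, hb⟩
      show (3 * ((-v : ℤ) : ℂ)) * q ^ (u ^ 2 + 3 * (-v) ^ 2) = _
      have he : u ^ 2 + 3 * (-v) ^ 2 = u ^ 2 + 3 * v ^ 2 := by ring
      rw [he]
      push_cast
      ring
    rw [h2, tsum_neg] at hJeq
    linear_combination (-1/2 : ℂ) * hJeq
  -- first piece
  have key1 : (∑' x : ↥s, f x.1.1) = ∑' b : {p : ℤ × ℤ // B1 p},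
      ((b.1.1 : ℂ) + 3 * (b.1.2 : ℂ)) * q ^ (b.1.1 ^ 2 + 3 * b.1.2 ^ 2) := by
    rw [← Equiv.tsum_eq E1 (fun x : ↥s => f x.1.1)]
    have hterm : ∀ b : {p : ℤ × ℤ // B1 p},
        f ((E1 b).1.1) = (b.1.1 : ℂ) * q ^ (b.1.1 ^ 2 + 3 * b.1.2 ^ 2) := by
      rintro ⟨⟨u, v⟩, hb⟩
      show f (u + 3 * v, u - v) = _
      simp only [hf_def]
      have he : ((u + 3 * v) ^ 2 + 3 * (u - v) ^ 2) / 4 = u ^ 2 + 3 * v ^ 2 := by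
        have h4 : (u + 3 * v) ^ 2 + 3 * (u - v) ^ 2 = 4 * (u ^ 2 + 3 * v ^ 2) := by ring
        rw [h4]
        exact Int.mul_ediv_cancel_left _ (by norm_num)
      rw [he]
      congr 1
      push_cast
      ring
    rw [tsum_congr hterm]
    have hRHS1 : (∑' b : {p : ℤ × ℤ // B1 p},
        ((b.1.1 : ℂ) + 3 * (b.1.2 : ℂ)) * q ^ (b.1.1 ^ 2 + 3 * b.1.2 ^ 2))
        = (∑' b : {p : ℤ × ℤ // B1 p}, (b.1.1 : ℂ) * q ^ (b.1.1 ^ 2 + 3 * b.1.2 ^ 2))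
        + (∑' b : {p : ℤ × ℤ // B1 p},
            (3 * (b.1.2 : ℂ)) * q ^ (b.1.1 ^ 2 + 3 * b.1.2 ^ 2)) := by
      rw [← Summable.tsum_add hS2 hS3]
      apply tsum_congr
      intro b
      ring
    rw [hRHS1, hzero, add_zero]
  -- second piece
  have key2 : (∑' x : ↥sᶜ, f x.1.1) = ∑' b : {p : ℤ × ℤ // B2 p},
      (((b.1.1 : ℂ) + 3 * (b.1.2 : ℂ)) / 2) * q ^ (b.1.1 ^ 2 + 3 * b.1.2 ^ 2) := by
    rw [← Equiv.tsum_eq E2 (fun x : ↥sᶜ => f x.1.1)]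
    apply tsum_congr
    rintro ⟨⟨u, v⟩, hb⟩
    show f (3 * v - u, u + v) = _
    simp only [hf_def]
    have he : ((3 * v - u) ^ 2 + 3 * (u + v) ^ 2) / 4 = u ^ 2 + 3 * v ^ 2 := by
      have h4 : (3 * v - u) ^ 2 + 3 * (u + v) ^ 2 = 4 * (u ^ 2 + 3 * v ^ 2) := by ring
      rw [h4]
      exact Int.mul_ediv_cancel_left _ (by norm_num)
    rw [he]
    congr 1
    push_cast
    ring
  have final : (∑' x : {p : ℤ × ℤ // A p}, f x.1)
      = (∑' b : {p : ℤ × ℤ // B1 p},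
          ((b.1.1 : ℂ) + 3 * (b.1.2 : ℂ)) * q ^ (b.1.1 ^ 2 + 3 * b.1.2 ^ 2))
      + (∑' b : {p : ℤ × ℤ // B2 p},
          (((b.1.1 : ℂ) + 3 * (b.1.2 : ℂ)) / 2) * q ^ (b.1.1 ^ 2 + 3 * b.1.2 ^ 2)) := by
    rw [← hsplit, key1, key2]
  exact final
end

section
/- For every q ∈ ℂ with |q| < 1: Σ_{(m,n)∈ℤ², m≡−2, n≡−2 (mod 6)} ((m+3n)/4)·q^{(m²+3n²)/4} = Σ_{(m,n)∈ℤ², (m,n)≡(1,−1) or (−2,2) (mod 6)} (m+3n)·q^{m²+3n²} + Σ_{(m,n)∈ℤ², (m,n)≡(2,−1) or (−1,2) (mod 6)} ((m+3n)/2)·q^{m²+3n²}. -/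
noncomputable section

namespace Stmt9Aux

lemma oneD {r : ℝ} (h0 : 0 ≤ r) (h1 : r < 1) :
    Summable (fun a : ℤ => ((a.natAbs : ℝ) + 1) * r ^ a.natAbs) := by
  have hnat : Summable (fun n : ℕ => ((n : ℝ) + 1) * r ^ n) := by
    have h2 : ‖r‖ < 1 := by rwa [Real.norm_eq_abs, abs_of_nonneg h0]
    have := summable_pow_mul_geometric_of_norm_lt_one 1 h2
    have hg := summable_geometric_of_lt_one h0 h1
    simpa [add_mul, pow_one] using this.add hg
  apply Summable.of_nat_of_neg <;> simpa using hnat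

lemma master (q : ℂ) (hq : ‖q‖ < 1) (c₁ c₂ c₃ : ℂ) :
    Summable (fun p : ℤ × ℤ => (c₁ * p.1 + c₂ * p.2 + c₃) * q ^ (p.1 ^ 2 + 3 * p.2 ^ 2)) := by
  set r : ℝ := ‖q‖ with hr
  have h0 : 0 ≤ r := norm_nonneg q
  set K : ℝ := ‖c₁‖ + ‖c₂‖ + ‖c₃‖ with hK
  have hKnn : 0 ≤ K := by positivity
  have hs : Summable (fun p : ℤ × ℤ =>
      (K * (((p.1.natAbs : ℝ) + 1) * r ^ p.1.natAbs)) * (((p.2.natAbs : ℝ) + 1) * r ^ p.2.natAbs)) := by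
    apply Summable.mul_of_nonneg ((oneD h0 hq).mul_left K) (oneD h0 hq)
    · intro a; positivity
    · intro b; positivity
  apply Summable.of_norm_bounded hs
  intro p
  obtain ⟨a, b⟩ := p
  have hexp : (a ^ 2 + 3 * b ^ 2 : ℤ) = ((a.natAbs ^ 2 + 3 * b.natAbs ^ 2 : ℕ) : ℤ) := by
    rw [← Int.natAbs_sq a, ← Int.natAbs_sq b]
    push_cast
    ring
  rw [norm_mul, hexp, zpow_natCast, norm_pow]
  have hra : ‖q‖ = r := rfl
  rw [hra]
  have hcoef : ‖c₁ * (a : ℂ) + c₂ * (b : ℂ) + c₃‖ ≤ K * ((a.natAbs : ℝ) + 1) * ((b.natAbs : ℝ) + 1) := by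
    have h1 : ‖c₁ * (a : ℂ) + c₂ * (b : ℂ) + c₃‖ ≤
        ‖c₁‖ * (a.natAbs : ℝ) + ‖c₂‖ * (b.natAbs : ℝ) + ‖c₃‖ := by
      refine (norm_add_le _ _).trans ?_
      gcongr
      refine (norm_add_le _ _).trans ?_
      gcongr <;> rw [norm_mul] <;>
        simp [Complex.norm_intCast, Nat.cast_natAbs]
    refine h1.trans ?_
    have ha : (0:ℝ) ≤ a.natAbs := Nat.cast_nonneg _
    have hb : (0:ℝ) ≤ b.natAbs := Nat.cast_nonneg _
    have h₁ : 0 ≤ ‖c₁‖ := norm_nonneg _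
    have h₂ : 0 ≤ ‖c₂‖ := norm_nonneg _
    have h₃ : 0 ≤ ‖c₃‖ := norm_nonneg _
    rw [hK]; nlinarith [mul_nonneg ha hb]
  have hrm : r ^ (a.natAbs ^ 2 + 3 * b.natAbs ^ 2) ≤ r ^ a.natAbs * r ^ b.natAbs := by
    rw [← pow_add]
    apply pow_le_pow_of_le_one h0 hq.le
    nlinarith [Nat.le_self_pow (two_ne_zero) a.natAbs, Nat.le_self_pow (two_ne_zero) b.natAbs]
  calc ‖c₁ * (a : ℂ) + c₂ * (b : ℂ) + c₃‖ * r ^ (a.natAbs ^ 2 + 3 * b.natAbs ^ 2)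
      ≤ (K * ((a.natAbs : ℝ) + 1) * ((b.natAbs : ℝ) + 1)) * (r ^ a.natAbs * r ^ b.natAbs) := by
        apply mul_le_mul hcoef hrm (by positivity) (by positivity)
    _ = (K * (((a.natAbs : ℝ) + 1) * r ^ a.natAbs)) * (((b.natAbs : ℝ) + 1) * r ^ b.natAbs) := by ring

/-- exponent for the A-part -/
def NA (s t : ℤ) : ℤ := (3*s+2)^2 + 3*(3*s+6*t+2)^2

/-- exponent for the C-part -/
def NC (s t : ℤ) : ℤ := (3*s+2)^2 + 3*(3*s+6*t-1)^2

def sA0 : Set (ℤ × ℤ) := {p | Int.ModEq 6 p.1 (-2) ∧ Int.ModEq 12 p.2 p.1}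
def sC0 : Set (ℤ × ℤ) := {p | Int.ModEq 6 p.1 (-2) ∧ Int.ModEq 12 p.2 (p.1 + 6)}

def eA0 : (ℤ × ℤ) ≃ sA0 where
  toFun st := ⟨(6*st.1+4, 6*st.1+12*st.2+4), by
    simp only [sA0, Set.mem_setOf_eq, Int.ModEq]; omega⟩
  invFun p := ((p.1.1-4)/6, (p.1.2-p.1.1)/12)
  left_inv st := by ext <;> simp <;> omega
  right_inv p := by
    obtain ⟨⟨a, b⟩, h⟩ := p
    simp only [sA0, Set.mem_setOf_eq, Int.ModEq] at h
    ext <;> simp <;> omega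

def eC0 : (ℤ × ℤ) ≃ sC0 where
  toFun st := ⟨(6*st.1+4, 6*st.1+12*st.2-2), by
    simp only [sC0, Set.mem_setOf_eq, Int.ModEq]; omega⟩
  invFun p := ((p.1.1-4)/6, (p.1.2-p.1.1+6)/12)
  left_inv st := by ext <;> simp <;> omega
  right_inv p := by
    obtain ⟨⟨a, b⟩, h⟩ := p
    simp only [sC0, Set.mem_setOf_eq, Int.ModEq] at h
    ext <;> simp <;> omega

def eB : (ℤ × ℤ) ≃ {p : ℤ × ℤ // (Int.ModEq 6 p.1 1 ∧ Int.ModEq 6 p.2 (-1)) ∨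
                            (Int.ModEq 6 p.1 (-2) ∧ Int.ModEq 6 p.2 2)} where
  toFun st := ⟨(3*st.1+1, 3*st.1+6*st.2-1), by
    simp only [Int.ModEq]; omega⟩
  invFun p := ((p.1.1-1)/3, (p.1.2-p.1.1+2)/6)
  left_inv st := by ext <;> simp <;> omega
  right_inv p := by
    obtain ⟨⟨a, b⟩, h⟩ := p
    simp only [Int.ModEq] at h
    ext <;> simp <;> omega

def eC : (ℤ × ℤ) ≃ {p : ℤ × ℤ // (Int.ModEq 6 p.1 2 ∧ Int.ModEq 6 p.2 (-1)) ∨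
                            (Int.ModEq 6 p.1 (-1) ∧ Int.ModEq 6 p.2 2)} where
  toFun st := ⟨(3*st.1+2, 3*st.1+6*st.2-1), by
    simp only [Int.ModEq]; omega⟩
  invFun p := ((p.1.1-2)/3, (p.1.2-p.1.1+3)/6)
  left_inv st := by ext <;> simp <;> omega
  right_inv p := by
    obtain ⟨⟨a, b⟩, h⟩ := p
    simp only [Int.ModEq] at h
    ext <;> simp <;> omega

def ψ : (ℤ × ℤ) ≃ (ℤ × ℤ) where
  toFun st := (-st.1-1, st.1+st.2+1)
  invFun st := (-st.1-1, st.1+st.2)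
  left_inv st := by ext <;> simp <;> omega
  right_inv st := by ext <;> simp <;> omega

def σ : (ℤ × ℤ) ≃ (ℤ × ℤ) where
  toFun st := (st.1+3*st.2, -st.2)
  invFun st := (st.1+3*st.2, -st.2)
  left_inv st := by ext <;> simp <;> omega
  right_inv st := by ext <;> simp <;> omega

end Stmt9Aux

end

open Stmt9Aux in
theorem stmt9 (q : ℂ) (hq : ‖q‖ < 1) :
    (∑' p : {p : ℤ × ℤ // Int.ModEq 6 p.1 (-2) ∧ Int.ModEq 6 p.2 (-2)},
        (((p.1.1 : ℂ) + 3 * (p.1.2 : ℂ)) / 4) * q ^ ((p.1.1 ^ 2 + 3 * p.1.2 ^ 2) / 4)) =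
      (∑' p : {p : ℤ × ℤ // (Int.ModEq 6 p.1 1 ∧ Int.ModEq 6 p.2 (-1)) ∨
                            (Int.ModEq 6 p.1 (-2) ∧ Int.ModEq 6 p.2 2)},
        ((p.1.1 : ℂ) + 3 * (p.1.2 : ℂ)) * q ^ (p.1.1 ^ 2 + 3 * p.1.2 ^ 2)) +
      (∑' p : {p : ℤ × ℤ // (Int.ModEq 6 p.1 2 ∧ Int.ModEq 6 p.2 (-1)) ∨
                            (Int.ModEq 6 p.1 (-1) ∧ Int.ModEq 6 p.2 2)},
        (((p.1.1 : ℂ) + 3 * (p.1.2 : ℂ)) / 2) * q ^ (p.1.1 ^ 2 + 3 * p.1.2 ^ 2)) := by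
  classical
  have termco : ∀ {c c' : ℂ} {e e' : ℤ}, c = c' → e = e' → c * q ^ e = c' * q ^ e' := by
    rintro c c' e e' rfl rfl; rfl
  -- summabilities of the coordinate sums
  have hinjA : Function.Injective (fun st : ℤ × ℤ => ((3*st.1+2, 3*st.1+6*st.2+2) : ℤ × ℤ)) := by
    intro a b h; rw [Prod.ext_iff] at h ⊢; simp only [Prod.fst, Prod.snd] at h ⊢; omega
  have s1 : Summable (fun st : ℤ × ℤ => (6*(st.1:ℂ)+9*st.2+4) * q ^ (NA st.1 st.2)) := by
    refine ((master q hq (1/2) (3/2) 0).comp_injective hinjA).congr fun st => ?_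
    refine termco (by push_cast; ring) (by simp only [NA])
  have hinjB : Function.Injective (fun st : ℤ × ℤ => ((-3*st.1-2, 3*st.1+6*st.2+2) : ℤ × ℤ)) := by
    intro a b h; rw [Prod.ext_iff] at h ⊢; simp only [Prod.fst, Prod.snd] at h ⊢; omega
  have s2 : Summable (fun st : ℤ × ℤ => (6*(st.1:ℂ)+18*st.2+4) * q ^ (NA st.1 st.2)) := by
    refine ((master q hq 1 3 0).comp_injective hinjB).congr fun st => ?_
    refine termco (by push_cast; ring) (by simp only [NA]; ring)
  have s3 : Summable (fun st : ℤ × ℤ => (9*(st.2:ℂ)) * q ^ (NA st.1 st.2)) := by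
    refine (s2.sub s1).congr fun st => ?_; ring
  have hinjC : Function.Injective (fun st : ℤ × ℤ => ((3*st.1+2, 3*st.1+6*st.2-1) : ℤ × ℤ)) := by
    intro a b h; rw [Prod.ext_iff] at h ⊢; simp only [Prod.fst, Prod.snd] at h ⊢; omega
  have sC1 : Summable (fun st : ℤ × ℤ => ((12*(st.1:ℂ)+18*st.2-1)/2) * q ^ (NC st.1 st.2)) := by
    refine ((master q hq (1/2) (3/2) 0).comp_injective hinjC).congr fun st => ?_
    refine termco (by push_cast; ring) (by simp only [NC])
  -- the vanishing sum
  have Z : ∑' st : ℤ × ℤ, (9*(st.2:ℂ)) * q ^ (NA st.1 st.2) = 0 := by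
    have h := σ.tsum_eq (fun st : ℤ × ℤ => (9*(st.2:ℂ)) * q ^ (NA st.1 st.2))
    have h2 : ∑' st : ℤ × ℤ, (9*((σ st).2:ℂ)) * q ^ (NA (σ st).1 (σ st).2)
        = ∑' st : ℤ × ℤ, -((9*(st.2:ℂ)) * q ^ (NA st.1 st.2)) := by
      refine tsum_congr fun st => ?_
      show (9*((-st.2:ℤ):ℂ)) * q ^ (NA (st.1+3*st.2) (-st.2)) = _
      rw [show NA (st.1+3*st.2) (-st.2) = NA st.1 st.2 by simp only [NA]; ring]
      push_cast; ring
    rw [h2, tsum_neg] at h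
    linear_combination (-1/2 : ℂ) * h
  have main1 : ∑' st : ℤ × ℤ, (6*(st.1:ℂ)+9*st.2+4) * q ^ (NA st.1 st.2)
      = ∑' st : ℤ × ℤ, (6*(st.1:ℂ)+18*st.2+4) * q ^ (NA st.1 st.2) := by
    have e : (fun st : ℤ × ℤ => (6*(st.1:ℂ)+18*st.2+4) * q ^ (NA st.1 st.2)) =
        fun st => (6*(st.1:ℂ)+9*st.2+4) * q ^ (NA st.1 st.2) + (9*(st.2:ℂ)) * q ^ (NA st.1 st.2) := by
      funext st; ring
    rw [e, Summable.tsum_add s1 s3, Z, add_zero]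
  -- pointwise descriptions of the pieces
  have ptA : ∀ st : ℤ × ℤ,
      (((((6*st.1+4 : ℤ)):ℂ) + 3 * ((6*st.1+12*st.2+4 : ℤ):ℂ)) / 4) *
        q ^ (((6*st.1+4)^2 + 3*(6*st.1+12*st.2+4)^2) / 4)
      = (6*(st.1:ℂ)+9*st.2+4) * q ^ (NA st.1 st.2) := by
    intro st
    refine termco (by push_cast; ring) ?_
    rw [show ((6*st.1+4)^2 + 3*(6*st.1+12*st.2+4)^2) = 4 * NA st.1 st.2 by simp only [NA]; ring]
    exact Int.mul_ediv_cancel_left _ (by norm_num)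
  have ptC : ∀ st : ℤ × ℤ,
      (((((6*st.1+4 : ℤ)):ℂ) + 3 * ((6*st.1+12*st.2-2 : ℤ):ℂ)) / 4) *
        q ^ (((6*st.1+4)^2 + 3*(6*st.1+12*st.2-2)^2) / 4)
      = ((12*(st.1:ℂ)+18*st.2-1)/2) * q ^ (NC st.1 st.2) := by
    intro st
    refine termco (by push_cast; ring) ?_
    rw [show ((6*st.1+4)^2 + 3*(6*st.1+12*st.2-2)^2) = 4 * NC st.1 st.2 by simp only [NC]; ring]
    exact Int.mul_ediv_cancel_left _ (by norm_num)
  -- the left-hand side function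
  set T0 : ℤ × ℤ → ℂ := fun w => (((w.1 : ℂ) + 3 * (w.2 : ℂ)) / 4) * q ^ ((w.1 ^ 2 + 3 * w.2 ^ 2) / 4)
    with hT0
  have hsA0 : Summable ((fun p : ℤ × ℤ => T0 p) ∘ ((↑) : sA0 → ℤ × ℤ)) := by
    apply eA0.summable_iff.mp
    refine s1.congr fun st => ?_
    exact (ptA st).symm
  have hsC0 : Summable ((fun p : ℤ × ℤ => T0 p) ∘ ((↑) : sC0 → ℤ × ℤ)) := by
    apply eC0.summable_iff.mp
    refine sC1.congr fun st => ?_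
    exact (ptC st).symm
  -- set identification and splitting
  have hiff : ∀ p : ℤ × ℤ, (p ∈ sA0 ∪ sC0) ↔ (Int.ModEq 6 p.1 (-2) ∧ Int.ModEq 6 p.2 (-2)) := by
    intro p
    simp only [sA0, sC0, Set.mem_union, Set.mem_setOf_eq, Int.ModEq]
    omega
  have hd : Disjoint sA0 sC0 := by
    rw [Set.disjoint_left]
    intro p h1 h2
    simp only [sA0, sC0, Set.mem_setOf_eq, Int.ModEq] at h1 h2
    omega
  have lhs_eq : (∑' p : {p : ℤ × ℤ // Int.ModEq 6 p.1 (-2) ∧ Int.ModEq 6 p.2 (-2)}, T0 p.1)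
      = (∑' x : sA0, T0 x) + (∑' x : sC0, T0 x) := by
    rw [← Summable.tsum_union_disjoint (f := T0) hd hsA0 hsC0]
    exact ((Equiv.subtypeEquivRight hiff).tsum_eq (fun p : {p : ℤ × ℤ //
      Int.ModEq 6 p.1 (-2) ∧ Int.ModEq 6 p.2 (-2)} => T0 p.1)).symm
  -- evaluate the two pieces
  have hA0 : (∑' x : sA0, T0 x) = ∑' st : ℤ × ℤ, (6*(st.1:ℂ)+9*st.2+4) * q ^ (NA st.1 st.2) := by
    rw [← eA0.tsum_eq (fun x : sA0 => T0 x)]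
    exact tsum_congr fun st => ptA st
  have hC0 : (∑' x : sC0, T0 x) = ∑' st : ℤ × ℤ, ((12*(st.1:ℂ)+18*st.2-1)/2) * q ^ (NC st.1 st.2) := by
    rw [← eC0.tsum_eq (fun x : sC0 => T0 x)]
    exact tsum_congr fun st => ptC st
  -- the second sum on the right
  have hC : (∑' p : {p : ℤ × ℤ // (Int.ModEq 6 p.1 2 ∧ Int.ModEq 6 p.2 (-1)) ∨
                            (Int.ModEq 6 p.1 (-1) ∧ Int.ModEq 6 p.2 2)},
        (((p.1.1 : ℂ) + 3 * (p.1.2 : ℂ)) / 2) * q ^ (p.1.1 ^ 2 + 3 * p.1.2 ^ 2))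
      = ∑' st : ℤ × ℤ, ((12*(st.1:ℂ)+18*st.2-1)/2) * q ^ (NC st.1 st.2) := by
    rw [← eC.tsum_eq (fun p : {p : ℤ × ℤ // (Int.ModEq 6 p.1 2 ∧ Int.ModEq 6 p.2 (-1)) ∨
                            (Int.ModEq 6 p.1 (-1) ∧ Int.ModEq 6 p.2 2)} =>
      (((p.1.1 : ℂ) + 3 * (p.1.2 : ℂ)) / 2) * q ^ (p.1.1 ^ 2 + 3 * p.1.2 ^ 2))]
    refine tsum_congr fun st => ?_
    show ((((3*st.1+2 : ℤ) : ℂ) + 3 * ((3*st.1+6*st.2-1 : ℤ) : ℂ)) / 2) *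
        q ^ ((3*st.1+2) ^ 2 + 3 * (3*st.1+6*st.2-1) ^ 2) = _
    refine termco (by push_cast; ring) (by simp only [NC])
  -- the first sum on the right
  have hB : (∑' p : {p : ℤ × ℤ // (Int.ModEq 6 p.1 1 ∧ Int.ModEq 6 p.2 (-1)) ∨
                            (Int.ModEq 6 p.1 (-2) ∧ Int.ModEq 6 p.2 2)},
        ((p.1.1 : ℂ) + 3 * (p.1.2 : ℂ)) * q ^ (p.1.1 ^ 2 + 3 * p.1.2 ^ 2))
      = ∑' st : ℤ × ℤ, (6*(st.1:ℂ)+18*st.2+4) * q ^ (NA st.1 st.2) := by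
    have hB' : ∑' st : ℤ × ℤ, ((((3*st.1+1 : ℤ)):ℂ) + 3*((3*st.1+6*st.2-1 : ℤ):ℂ)) *
          q ^ ((3*st.1+1) ^ 2 + 3 * (3*st.1+6*st.2-1) ^ 2)
        = ∑' st : ℤ × ℤ, (6*(st.1:ℂ)+18*st.2+4) * q ^ (NA st.1 st.2) := by
      rw [← ψ.tsum_eq (fun st : ℤ × ℤ => ((((3*st.1+1 : ℤ)):ℂ) + 3*((3*st.1+6*st.2-1 : ℤ):ℂ)) *
          q ^ ((3*st.1+1) ^ 2 + 3 * (3*st.1+6*st.2-1) ^ 2))]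
      refine tsum_congr fun st => ?_
      show (((3*(-st.1-1)+1 : ℤ) : ℂ) + 3 * ((3*(-st.1-1)+6*(st.1+st.2+1)-1 : ℤ) : ℂ)) *
          q ^ ((3*(-st.1-1)+1) ^ 2 + 3 * (3*(-st.1-1)+6*(st.1+st.2+1)-1) ^ 2) = _
      refine termco (by push_cast; ring) (by simp only [NA]; ring)
    rw [← eB.tsum_eq (fun p : {p : ℤ × ℤ // (Int.ModEq 6 p.1 1 ∧ Int.ModEq 6 p.2 (-1)) ∨
                            (Int.ModEq 6 p.1 (-2) ∧ Int.ModEq 6 p.2 2)} =>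
      ((p.1.1 : ℂ) + 3 * (p.1.2 : ℂ)) * q ^ (p.1.1 ^ 2 + 3 * p.1.2 ^ 2))]
    exact (tsum_congr fun st => rfl).trans hB'
  -- finish
  show (∑' p : {p : ℤ × ℤ // Int.ModEq 6 p.1 (-2) ∧ Int.ModEq 6 p.2 (-2)}, T0 p.1) = _
  rw [lhs_eq, hA0, hC0, hB, hC, main1]
end

section
/- For every q ∈ ℂ with |q| < 1: Σ_{(m,n)∈ℤ², (m,n)≡(−1,−1) or (2,2) (mod 6)} (m+3n)·q^{m²+3n²} = 2 · Σ_{(m,n)∈ℤ², (m,n)≡(1,−1) or (−2,2) (mod 6)} (m+3n)·q^{m²+3n²}. -/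
private def condL (p : ℤ × ℤ) : Prop :=
  (Int.ModEq 6 p.1 (-1) ∧ Int.ModEq 6 p.2 (-1)) ∨ (Int.ModEq 6 p.1 2 ∧ Int.ModEq 6 p.2 2)

private def condR (p : ℤ × ℤ) : Prop :=
  (Int.ModEq 6 p.1 1 ∧ Int.ModEq 6 p.2 (-1)) ∨ (Int.ModEq 6 p.1 (-2) ∧ Int.ModEq 6 p.2 2)

private def e1 : {p : ℤ × ℤ // condL p} ≃ {p : ℤ × ℤ // condR p} where
  toFun x := ⟨(-x.1.1, x.1.2), by
    have h := x.2; simp only [condL, condR, Int.ModEq] at h ⊢; omega⟩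
  invFun x := ⟨(-x.1.1, x.1.2), by
    have h := x.2; simp only [condL, condR, Int.ModEq] at h ⊢; omega⟩
  left_inv x := Subtype.ext (by simp)
  right_inv x := Subtype.ext (by simp)

private def psiFun (x : {p : ℤ × ℤ // condL p}) : {p : ℤ × ℤ // condL p} :=
  ⟨((3 * x.1.2 - x.1.1) / 2, (x.1.1 + x.1.2) / 2), by
    have h := x.2; simp only [condL, Int.ModEq] at h ⊢; omega⟩

private lemma psi_invol : Function.Involutive psiFun := by
  intro x
  obtain ⟨⟨m, n⟩, h⟩ := x
  simp only [condL, Int.ModEq] at h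
  apply Subtype.ext
  simp only [psiFun, Prod.mk.injEq]
  constructor <;> omega

private def psi : Equiv.Perm {p : ℤ × ℤ // condL p} := psi_invol.toPerm

private lemma int_abs_le_sq (k : ℤ) : |k| ≤ k ^ 2 := by
  rcases eq_or_ne k 0 with h | h
  · simp [h]
  · have h1 : 1 ≤ |k| := Int.one_le_abs h
    nlinarith [sq_abs k]

private lemma summable_nat (r c : ℝ) (h0 : 0 ≤ r) (h1 : r < 1) :
    Summable (fun n : ℕ => (c * n + 1) * r ^ n) := by
  have h2 : ‖r‖ < 1 := by rwa [Real.norm_eq_abs, abs_of_nonneg h0]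
  have hp := (summable_pow_mul_geometric_of_norm_lt_one 1 h2).mul_left c
  have hg := summable_geometric_of_lt_one h0 h1
  refine (hp.add hg).congr fun n => ?_
  push_cast; ring

private lemma summable_int (r c : ℝ) (h0 : 0 ≤ r) (h1 : r < 1) :
    Summable (fun m : ℤ => (c * m.natAbs + 1) * r ^ m.natAbs) := by
  apply Summable.of_nat_of_neg <;>
    · refine (summable_nat r c h0 h1).congr fun n => ?_
      simp

private lemma summable_B (r : ℝ) (h0 : 0 ≤ r) (h1 : r < 1) :
    Summable (fun p : ℤ × ℤ =>
      ((p.1.natAbs + 1 : ℝ) * r ^ p.1.natAbs) * ((3 * p.2.natAbs + 1 : ℝ) * r ^ p.2.natAbs)) := by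
  have hf : Summable (fun m : ℤ => (m.natAbs + 1 : ℝ) * r ^ m.natAbs) :=
    (summable_int r 1 h0 h1).congr fun m => by push_cast; ring
  have hg : Summable (fun n : ℤ => (3 * n.natAbs + 1 : ℝ) * r ^ n.natAbs) :=
    (summable_int r 3 h0 h1).congr fun n => by push_cast; ring
  exact hf.mul_of_nonneg hg (fun m => by positivity) (fun n => by positivity)

private lemma norm_term_le (q : ℂ) (hq : ‖q‖ < 1) (m n a : ℤ)
    (ha : |a| ≤ |m| + 3 * |n|) :
    ‖(a : ℂ) * q ^ (m ^ 2 + 3 * n ^ 2)‖ ≤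
      ((m.natAbs + 1 : ℝ) * ‖q‖ ^ m.natAbs) *
        ((3 * n.natAbs + 1 : ℝ) * ‖q‖ ^ n.natAbs) := by
  set r := ‖q‖ with hr
  have h0 : 0 ≤ r := norm_nonneg q
  have hN : (0 : ℤ) ≤ m ^ 2 + 3 * n ^ 2 := by positivity
  have hq1 : q ^ (m ^ 2 + 3 * n ^ 2) = q ^ (m ^ 2 + 3 * n ^ 2).toNat := by
    rw [← zpow_natCast, Int.toNat_of_nonneg hN]
  have hexp : m.natAbs + n.natAbs ≤ (m ^ 2 + 3 * n ^ 2).toNat := by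
    have h2 : ((m.natAbs + n.natAbs : ℕ) : ℤ) ≤ m ^ 2 + 3 * n ^ 2 := by
      push_cast [Int.natCast_natAbs]
      have := int_abs_le_sq m
      have := int_abs_le_sq n
      have := sq_nonneg n
      linarith
    omega
  have hpow : r ^ (m ^ 2 + 3 * n ^ 2).toNat ≤ r ^ m.natAbs * r ^ n.natAbs := by
    rw [← pow_add]
    exact pow_le_pow_of_le_one h0 hq.le hexp
  have hnorm : ‖(a : ℂ)‖ ≤ (m.natAbs + 1 : ℝ) * (3 * n.natAbs + 1 : ℝ) := by
    have h3 : ‖(a : ℂ)‖ = |(a : ℝ)| := by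
      rw [Complex.norm_intCast]
    rw [h3]
    have h4 : |(a : ℝ)| ≤ |(m : ℝ)| + 3 * |(n : ℝ)| := by
      have := ha
      push_cast [← Int.cast_abs]
      exact_mod_cast ha
    have h5 : ((m.natAbs : ℝ)) = |(m : ℝ)| := by
      simp [Nat.cast_natAbs]
    have h6 : ((n.natAbs : ℝ)) = |(n : ℝ)| := by
      simp [Nat.cast_natAbs]
    rw [h5, h6]
    nlinarith [abs_nonneg (m : ℝ), abs_nonneg (n : ℝ)]
  calc ‖(a : ℂ) * q ^ (m ^ 2 + 3 * n ^ 2)‖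
      = ‖(a : ℂ)‖ * r ^ (m ^ 2 + 3 * n ^ 2).toNat := by
        rw [hq1, norm_mul, norm_pow]
    _ ≤ ((m.natAbs + 1 : ℝ) * (3 * n.natAbs + 1 : ℝ)) * (r ^ m.natAbs * r ^ n.natAbs) := by
        apply mul_le_mul hnorm hpow (pow_nonneg h0 _)
        positivity
    _ = ((m.natAbs + 1 : ℝ) * r ^ m.natAbs) * ((3 * n.natAbs + 1 : ℝ) * r ^ n.natAbs) := by ring

theorem stmt10 (q : ℂ) (hq : ‖q‖ < 1) :
    (∑' p : {p : ℤ × ℤ // (Int.ModEq 6 p.1 (-1) ∧ Int.ModEq 6 p.2 (-1)) ∨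
                          (Int.ModEq 6 p.1 2 ∧ Int.ModEq 6 p.2 2)},
        ((p.1.1 : ℂ) + 3 * (p.1.2 : ℂ)) * q ^ (p.1.1 ^ 2 + 3 * p.1.2 ^ 2)) =
      2 * ∑' p : {p : ℤ × ℤ // (Int.ModEq 6 p.1 1 ∧ Int.ModEq 6 p.2 (-1)) ∨
                               (Int.ModEq 6 p.1 (-2) ∧ Int.ModEq 6 p.2 2)},
        ((p.1.1 : ℂ) + 3 * (p.1.2 : ℂ)) * q ^ (p.1.1 ^ 2 + 3 * p.1.2 ^ 2) := by
  show (∑' p : {p : ℤ × ℤ // condL p},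
        ((p.1.1 : ℂ) + 3 * (p.1.2 : ℂ)) * q ^ (p.1.1 ^ 2 + 3 * p.1.2 ^ 2)) =
      2 * ∑' p : {p : ℤ × ℤ // condR p},
        ((p.1.1 : ℂ) + 3 * (p.1.2 : ℂ)) * q ^ (p.1.1 ^ 2 + 3 * p.1.2 ^ 2)
  have h0 : 0 ≤ ‖q‖ := norm_nonneg q
  have hB := summable_B ‖q‖ h0 hq
  have key : ∀ w : ℤ × ℤ → ℤ, (∀ p : ℤ × ℤ, |w p| ≤ |p.1| + 3 * |p.2|) →
      Summable (fun p : {p : ℤ × ℤ // condL p} =>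
        ((w p.1 : ℤ) : ℂ) * q ^ (p.1.1 ^ 2 + 3 * p.1.2 ^ 2)) := by
    intro w hw
    apply Summable.of_norm_bounded (hB.subtype {p : ℤ × ℤ | condL p})
    intro p
    exact norm_term_le q hq p.1.1 p.1.2 (w p.1) (hw p.1)
  have hf := key (fun p => p.1 + 3 * p.2) (fun p => by
    calc |p.1 + 3 * p.2| ≤ |p.1| + |3 * p.2| := abs_add_le _ _
    _ = |p.1| + 3 * |p.2| := by rw [abs_mul]; norm_num)
  have hg := key (fun p => -p.1 + 3 * p.2) (fun p => by
    calc |(-p.1) + 3 * p.2| ≤ |(-p.1)| + |3 * p.2| := abs_add_le _ _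
    _ = |p.1| + 3 * |p.2| := by rw [abs_neg, abs_mul]; norm_num)
  -- the vanishing sum
  have hzero : (∑' p : {p : ℤ × ℤ // condL p},
      ((p.1.1 - p.1.2 : ℤ) : ℂ) * q ^ (p.1.1 ^ 2 + 3 * p.1.2 ^ 2)) = 0 := by
    have hpt : ∀ x : {p : ℤ × ℤ // condL p},
        (((psi x).1.1 - (psi x).1.2 : ℤ) : ℂ) * q ^ ((psi x).1.1 ^ 2 + 3 * (psi x).1.2 ^ 2)
          = -(((x.1.1 - x.1.2 : ℤ) : ℂ) * q ^ (x.1.1 ^ 2 + 3 * x.1.2 ^ 2)) := by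
      intro x
      obtain ⟨⟨m, n⟩, h⟩ := x
      have hc := h
      simp only [condL, Int.ModEq] at hc
      simp only [psi, Function.Involutive.toPerm, psiFun, Equiv.coe_fn_mk]
      have h1 : (3 * n - m) / 2 - (m + n) / 2 = -(m - n) := by omega
      have hu : 2 * ((3 * n - m) / 2) = 3 * n - m := by omega
      have hv : 2 * ((m + n) / 2) = m + n := by omega
      have he4 : 4 * (((3 * n - m) / 2) ^ 2 + 3 * ((m + n) / 2) ^ 2)
          = 4 * (m ^ 2 + 3 * n ^ 2) := by
        linear_combination (2 * ((3 * n - m) / 2) + (3 * n - m)) * hu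
          + 3 * (2 * ((m + n) / 2) + (m + n)) * hv
      have he : ((3 * n - m) / 2) ^ 2 + 3 * ((m + n) / 2) ^ 2 = m ^ 2 + 3 * n ^ 2 := by
        linarith
      rw [h1, he]
      push_cast
      ring
    have hre := Equiv.tsum_eq psi (fun p : {p : ℤ × ℤ // condL p} =>
      ((p.1.1 - p.1.2 : ℤ) : ℂ) * q ^ (p.1.1 ^ 2 + 3 * p.1.2 ^ 2))
    rw [tsum_congr hpt, tsum_neg] at hre
    linear_combination (-1/2 : ℂ) * hre
  -- rewrite the right-hand sum over condR as a sum over condL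
  have hR : (∑' p : {p : ℤ × ℤ // condR p},
        ((p.1.1 : ℂ) + 3 * (p.1.2 : ℂ)) * q ^ (p.1.1 ^ 2 + 3 * p.1.2 ^ 2))
      = ∑' p : {p : ℤ × ℤ // condL p},
        ((-p.1.1 + 3 * p.1.2 : ℤ) : ℂ) * q ^ (p.1.1 ^ 2 + 3 * p.1.2 ^ 2) := by
    rw [← Equiv.tsum_eq e1 (fun p : {p : ℤ × ℤ // condR p} =>
      ((p.1.1 : ℂ) + 3 * (p.1.2 : ℂ)) * q ^ (p.1.1 ^ 2 + 3 * p.1.2 ^ 2))]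
    apply tsum_congr
    intro x
    obtain ⟨⟨m, n⟩, h⟩ := x
    simp only [e1, Equiv.coe_fn_mk]
    rw [show ((-m) ^ 2 + 3 * n ^ 2 : ℤ) = m ^ 2 + 3 * n ^ 2 by ring]
    push_cast
    ring
  have hL : (∑' p : {p : ℤ × ℤ // condL p},
        ((p.1.1 : ℂ) + 3 * (p.1.2 : ℂ)) * q ^ (p.1.1 ^ 2 + 3 * p.1.2 ^ 2))
      = ∑' p : {p : ℤ × ℤ // condL p},
        ((p.1.1 + 3 * p.1.2 : ℤ) : ℂ) * q ^ (p.1.1 ^ 2 + 3 * p.1.2 ^ 2) :=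
    tsum_congr fun x => by push_cast; ring
  rw [hL, hR]
  have hsub : (∑' p : {p : ℤ × ℤ // condL p},
        ((p.1.1 + 3 * p.1.2 : ℤ) : ℂ) * q ^ (p.1.1 ^ 2 + 3 * p.1.2 ^ 2))
      - 2 * (∑' p : {p : ℤ × ℤ // condL p},
        ((-p.1.1 + 3 * p.1.2 : ℤ) : ℂ) * q ^ (p.1.1 ^ 2 + 3 * p.1.2 ^ 2))
      = 3 * ∑' p : {p : ℤ × ℤ // condL p},
        ((p.1.1 - p.1.2 : ℤ) : ℂ) * q ^ (p.1.1 ^ 2 + 3 * p.1.2 ^ 2) := by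
    rw [← tsum_mul_left (a := (2 : ℂ)), ← Summable.tsum_sub hf (hg.mul_left 2), ← tsum_mul_left (a := (3 : ℂ))]
    apply tsum_congr
    intro x
    push_cast
    ring
  rw [hzero, mul_zero] at hsub
  linear_combination hsub
end

section
/- Let s ∈ ℂ with s ≠ 0 and s ≠ 64, and let E_s be the elliptic curve y² = (x − 1)(x² − s/(s−64)), i.e., the Weierstrass curve over ℂ with coefficients a₁ = 0, a₂ = −1, a₃ = 0, a₄ = −s/(s−64), a₆ = s/(s−64). Then E_s has nonzero discriminant and its j-invariant equals (s − 16)³/s. -/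
/-- The Weierstrass curve `y² = (x − 1)(x² − s/(s−64))`, i.e.
`y² = x³ − x² − (s/(s−64))x + s/(s−64)`. -/
noncomputable def Ws (s : ℂ) : WeierstrassCurve ℂ :=
  ⟨0, -1, 0, -(s / (s - 64)), s / (s - 64)⟩

theorem stmt16 (s : ℂ) (h0 : s ≠ 0) (h64 : s ≠ 64) :
    (Ws s).Δ ≠ 0 ∧ (Ws s).c₄ ^ 3 / (Ws s).Δ = (s - 16) ^ 3 / s := by
  have hs : s - 64 ≠ 0 := sub_ne_zero.mpr h64
  set c : ℂ := s / (s - 64) with hc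
  have hΔc : (Ws s).Δ = 64 * c * (c - 1) ^ 2 := by
    simp only [WeierstrassCurve.Δ, WeierstrassCurve.b₂, WeierstrassCurve.b₄,
      WeierstrassCurve.b₆, WeierstrassCurve.b₈, Ws]
    ring
  have hc4 : (Ws s).c₄ = 16 + 48 * c := by
    simp only [WeierstrassCurve.c₄, WeierstrassCurve.b₂, WeierstrassCurve.b₄, Ws]
    ring
  have hcne : c ≠ 0 := div_ne_zero h0 hs
  have hc1 : c - 1 = 64 / (s - 64) := by
    rw [hc]; field_simp; ring
  have hc1ne : c - 1 ≠ 0 := by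
    rw [hc1]; exact div_ne_zero (by norm_num) hs
  have hΔ0 : (Ws s).Δ ≠ 0 := by
    rw [hΔc]
    exact mul_ne_zero (mul_ne_zero (by norm_num) hcne) (pow_ne_zero _ hc1ne)
  refine ⟨hΔ0, ?_⟩
  rw [hΔc, hc4, hc, div_eq_div_iff (by rw [← hc, ← hΔc]; exact hΔ0) h0]
  field_simp [hs]
  ring
end

section
/- For every real μ with 0 ≤ μ < 1/64: (1/(2π)³) ∫₀^{2π}∫₀^{2π}∫₀^{2π} dθ₁ dθ₂ dθ₃ / (1 − 8√μ · cos θ₁ cos θ₂ cos θ₃) = Σ_{k=0}^∞ ((1/2)_k / k!)³ · (64μ)^k, i.e., the period integral of the K3 family equals the hypergeometric series ₃F₂(1/2, 1/2, 1/2; 1, 1; 64μ). -/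
open Real MeasureTheory Finset Function

/-- Pochhammer symbol `(a)_k = a(a+1)⋯(a+k−1)`. -/
noncomputable def poch (a : ℝ) (k : ℕ) : ℝ := ∏ i ∈ Finset.range k, (a + i)

/-- The Wallis integral over a full period. -/
noncomputable def W (n : ℕ) : ℝ := ∫ θ in (0:ℝ)..(2*Real.pi), Real.cos θ ^ n

lemma W_eq (n : ℕ) :
    W n = (1 + (-1:ℝ)^n) * ∫ x in (0:ℝ)..Real.pi, Real.sin x ^ n := by
  have hper : Function.Periodic (fun θ : ℝ => Real.sin θ ^ n) (2*Real.pi) := fun x => by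
    simp [Real.sin_add_two_pi]
  have h1 : W n = ∫ x in (0:ℝ)..(2*Real.pi), Real.sin (x + Real.pi/2) ^ n := by
    unfold W
    refine intervalIntegral.integral_congr fun x _ => ?_
    rw [Real.sin_add_pi_div_two]
  have h2 : (∫ x in (0:ℝ)..(2*Real.pi), Real.sin (x + Real.pi/2) ^ n)
      = ∫ x in (Real.pi/2)..(2*Real.pi + Real.pi/2), Real.sin x ^ n := by
    have h := intervalIntegral.integral_comp_add_right (a := (0:ℝ)) (b := 2*Real.pi)
      (fun x => Real.sin x ^ n) (Real.pi/2)
    rw [zero_add] at h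
    exact h
  have h3 : (∫ x in (Real.pi/2)..(2*Real.pi + Real.pi/2), Real.sin x ^ n)
      = ∫ x in (0:ℝ)..(2*Real.pi), Real.sin x ^ n := by
    have := hper.intervalIntegral_add_eq (Real.pi/2) 0
    simpa [add_comm, zero_add] using this
  have hint : ∀ a b : ℝ, IntervalIntegrable (fun x => Real.sin x ^ n) volume a b :=
    fun a b => (Real.continuous_sin.pow n).intervalIntegrable a b
  have h4 : (∫ x in (0:ℝ)..(2*Real.pi), Real.sin x ^ n)
      = (∫ x in (0:ℝ)..Real.pi, Real.sin x ^ n)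
        + ∫ x in Real.pi..(2*Real.pi), Real.sin x ^ n := by
    rw [intervalIntegral.integral_add_adjacent_intervals (hint 0 Real.pi)
      (hint Real.pi (2*Real.pi))]
  have h5 : (∫ x in Real.pi..(2*Real.pi), Real.sin x ^ n)
      = (-1:ℝ)^n * ∫ x in (0:ℝ)..Real.pi, Real.sin x ^ n := by
    have := intervalIntegral.integral_comp_add_right (fun x => Real.sin x ^ n) Real.pi
      (a := 0) (b := Real.pi)
    rw [zero_add, show Real.pi + Real.pi = 2*Real.pi by ring] at this
    rw [← this, ← intervalIntegral.integral_const_mul]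
    refine intervalIntegral.integral_congr fun x _ => ?_
    rw [Real.sin_add_pi]
    rw [neg_pow]
  rw [h1, h2, h3, h4, h5]; ring

lemma W_odd (m : ℕ) : W (2*m+1) = 0 := by
  rw [W_eq]
  have : ((-1:ℝ))^(2*m+1) = -1 := by
    rw [pow_succ, pow_mul]; norm_num
  rw [this]; ring

lemma W_even (m : ℕ) :
    W (2*m) = 2*Real.pi * ∏ i ∈ Finset.range m, (2*(i:ℝ)+1)/(2*i+2) := by
  rw [W_eq, integral_sin_pow_even]
  have : ((-1:ℝ))^(2*m) = 1 := by rw [pow_mul]; norm_num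
  rw [this]; ring

lemma W_abs (n : ℕ) : |W n| ≤ 2*Real.pi := by
  have h := intervalIntegral.norm_integral_le_of_norm_le_const
    (a := (0:ℝ)) (b := 2*Real.pi) (C := 1)
    (f := fun θ => Real.cos θ ^ n) ?_
  · have hπ : (0:ℝ) ≤ 2*Real.pi := by positivity
    simpa [W, Real.norm_eq_abs, abs_of_nonneg hπ] using h
  · intro x _
    rw [Real.norm_eq_abs, abs_pow]
    exact pow_le_one₀ (abs_nonneg _) (Real.abs_cos_le_one x)

lemma abs_mul_cos_le (a θ : ℝ) : |a * Real.cos θ| ≤ |a| := by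
  rw [abs_mul]
  exact mul_le_of_le_one_right (abs_nonneg a) (Real.abs_cos_le_one θ)

lemma swap_lemma (a : ℕ → ℝ) (M r : ℝ) (hr0 : 0 ≤ r) (hr1 : r < 1)
    (hM : ∀ k, |a k| ≤ M * r ^ k) :
    (∫ θ in (0:ℝ)..(2*Real.pi), ∑' k, a k * Real.cos θ ^ k) = ∑' k, a k * W k := by
  have h2π : (0:ℝ) ≤ 2*Real.pi := by positivity
  have hmeas : volume (Set.Ioc (0:ℝ) (2*Real.pi)) < ⊤ := by
    rw [Real.volume_Ioc]; exact ENNReal.ofReal_lt_top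
  have hvol : (volume (Set.Ioc (0:ℝ) (2*Real.pi))).toReal = 2*Real.pi := by
    rw [Real.volume_Ioc, ENNReal.toReal_ofReal (by linarith)]
    ring
  have hcont : ∀ k : ℕ, Continuous fun θ : ℝ => a k * Real.cos θ ^ k :=
    fun k => continuous_const.mul (Real.continuous_cos.pow k)
  have hint : ∀ k : ℕ, Integrable (fun θ => a k * Real.cos θ ^ k)
      (volume.restrict (Set.Ioc (0:ℝ) (2*Real.pi))) :=
    fun k => (hcont k).integrableOn_Ioc
  have hsum : Summable fun k : ℕ =>
      ∫ θ in Set.Ioc (0:ℝ) (2*Real.pi), ‖a k * Real.cos θ ^ k‖ := by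
    refine Summable.of_nonneg_of_le
      (fun k => integral_nonneg fun θ => norm_nonneg _) (fun k => ?_)
      (Summable.mul_left (M * (2*Real.pi)) (summable_geometric_of_lt_one hr0 hr1))
    have hb : ∀ θ ∈ Set.Ioc (0:ℝ) (2*Real.pi), ‖‖a k * Real.cos θ ^ k‖‖ ≤ |a k| := by
      intro θ _
      rw [norm_norm, Real.norm_eq_abs, abs_mul, abs_pow]
      calc |a k| * |Real.cos θ| ^ k ≤ |a k| * 1 :=
            mul_le_mul_of_nonneg_left
              (pow_le_one₀ (abs_nonneg _) (Real.abs_cos_le_one θ)) (abs_nonneg _)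
        _ = |a k| := mul_one _
    have h := norm_setIntegral_le_of_norm_le_const (μ := volume) hmeas hb
    rw [Measure.real, hvol] at h
    calc (∫ θ in Set.Ioc (0:ℝ) (2*Real.pi), ‖a k * Real.cos θ ^ k‖)
        ≤ ‖∫ θ in Set.Ioc (0:ℝ) (2*Real.pi), ‖a k * Real.cos θ ^ k‖‖ := le_abs_self _
      _ ≤ |a k| * (2*Real.pi) := h
      _ ≤ (M * r ^ k) * (2*Real.pi) := by
          have := hM k
          nlinarith [Real.pi_pos]
      _ = M * (2*Real.pi) * r ^ k := by ring
  have key := (MeasureTheory.hasSum_integral_of_summable_integral_norm hint hsum).tsum_eq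
  rw [intervalIntegral.integral_of_le h2π, ← key]
  refine tsum_congr fun k => ?_
  rw [← intervalIntegral.integral_of_le h2π, intervalIntegral.integral_const_mul]
  rfl

lemma poch_div (m : ℕ) :
    poch (1/2) m / (Nat.factorial m : ℝ)
      = ∏ i ∈ Finset.range m, (2*(i:ℝ)+1)/(2*i+2) := by
  have hfac : ((Nat.factorial m : ℕ) : ℝ) = ∏ i ∈ Finset.range m, ((i:ℝ)+1) := by
    rw [← Finset.prod_range_add_one_eq_factorial]
    push_cast; ring
  rw [poch, hfac, ← Finset.prod_div_distrib]
  refine Finset.prod_congr rfl fun i _ => ?_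
  rw [div_eq_div_iff (by positivity) (by positivity)]
  ring

theorem stmt17 (μ : ℝ) (h0 : 0 ≤ μ) (h1 : μ < 1/64) :
    (1 / (2 * Real.pi) ^ 3) *
      ∫ θ₁ in (0:ℝ)..(2 * Real.pi), ∫ θ₂ in (0:ℝ)..(2 * Real.pi),
        ∫ θ₃ in (0:ℝ)..(2 * Real.pi),
          1 / (1 - 8 * Real.sqrt μ * Real.cos θ₁ * Real.cos θ₂ * Real.cos θ₃) =
      ∑' k : ℕ, (poch (1/2) k / (Nat.factorial k : ℝ)) ^ 3 * (64 * μ) ^ k := by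
  have hπ : (0:ℝ) < Real.pi := Real.pi_pos
  have hs0 : 0 ≤ Real.sqrt μ := Real.sqrt_nonneg μ
  set r : ℝ := 8 * Real.sqrt μ with hrdef
  have hr0 : 0 ≤ r := by positivity
  have hr1 : r < 1 := by
    have h8 : Real.sqrt μ < 1/8 := by
      rw [show (1:ℝ)/8 = Real.sqrt (1/64) by
        rw [show (1:ℝ)/64 = (1/8)^2 by norm_num, Real.sqrt_sq (by norm_num)]]
      exact Real.sqrt_lt_sqrt h0 h1
    simp only [hrdef]; linarith
  -- step 1 : innermost integral
  have step1 : ∀ θ₁ θ₂ : ℝ,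
      (∫ θ₃ in (0:ℝ)..(2*Real.pi),
          1 / (1 - 8 * Real.sqrt μ * Real.cos θ₁ * Real.cos θ₂ * Real.cos θ₃))
        = ∑' k, ((8 * Real.sqrt μ * Real.cos θ₁) ^ k * W k) * Real.cos θ₂ ^ k := by
    intro θ₁ θ₂
    have hc : |8 * Real.sqrt μ * Real.cos θ₁ * Real.cos θ₂| ≤ r := by
      calc |8 * Real.sqrt μ * Real.cos θ₁ * Real.cos θ₂|
          ≤ |8 * Real.sqrt μ * Real.cos θ₁| := abs_mul_cos_le _ _
        _ ≤ |8 * Real.sqrt μ| := abs_mul_cos_le _ _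
        _ = r := abs_of_nonneg (by positivity)
    have hpt : ∀ θ₃ : ℝ,
        1 / (1 - 8 * Real.sqrt μ * Real.cos θ₁ * Real.cos θ₂ * Real.cos θ₃)
          = ∑' k : ℕ, (8 * Real.sqrt μ * Real.cos θ₁ * Real.cos θ₂) ^ k
              * Real.cos θ₃ ^ k := by
      intro θ₃
      have hx : ‖8 * Real.sqrt μ * Real.cos θ₁ * Real.cos θ₂ * Real.cos θ₃‖ < 1 := by
        rw [Real.norm_eq_abs]
        calc |8 * Real.sqrt μ * Real.cos θ₁ * Real.cos θ₂ * Real.cos θ₃|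
            ≤ |8 * Real.sqrt μ * Real.cos θ₁ * Real.cos θ₂| := abs_mul_cos_le _ _
          _ ≤ r := hc
          _ < 1 := hr1
      rw [one_div, ← tsum_geometric_of_norm_lt_one hx]
      exact tsum_congr fun k => mul_pow _ _ k
    rw [intervalIntegral.integral_congr
      (g := fun θ₃ => ∑' k : ℕ,
        ((8 * Real.sqrt μ * Real.cos θ₁ * Real.cos θ₂) ^ k) * Real.cos θ₃ ^ k)
      (fun θ₃ _ => hpt θ₃)]
    rw [swap_lemma _ 1 r hr0 hr1 (fun k => by
      rw [abs_pow, one_mul]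
      exact pow_le_pow_left₀ (abs_nonneg _) hc k)]
    refine tsum_congr fun k => ?_
    rw [show 8 * Real.sqrt μ * Real.cos θ₁ * Real.cos θ₂
        = (8 * Real.sqrt μ * Real.cos θ₁) * Real.cos θ₂ by ring, mul_pow]
    ring
  -- step 2 : middle integral
  have step2 : ∀ θ₁ : ℝ,
      (∫ θ₂ in (0:ℝ)..(2*Real.pi),
          ∑' k, ((8 * Real.sqrt μ * Real.cos θ₁) ^ k * W k) * Real.cos θ₂ ^ k)
        = ∑' k, (((8 * Real.sqrt μ) ^ k * W k * W k)) * Real.cos θ₁ ^ k := by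
    intro θ₁
    have hc : |8 * Real.sqrt μ * Real.cos θ₁| ≤ r := by
      calc |8 * Real.sqrt μ * Real.cos θ₁|
          ≤ |8 * Real.sqrt μ| := abs_mul_cos_le _ _
        _ = r := abs_of_nonneg (by positivity)
    rw [swap_lemma _ (2*Real.pi) r hr0 hr1 (fun k => by
      rw [abs_mul, abs_pow]
      calc |8 * Real.sqrt μ * Real.cos θ₁| ^ k * |W k|
          ≤ r ^ k * (2*Real.pi) :=
            mul_le_mul (pow_le_pow_left₀ (abs_nonneg _) hc k) (W_abs k)
              (abs_nonneg _) (pow_nonneg hr0 k)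
        _ = 2*Real.pi * r ^ k := by ring)]
    refine tsum_congr fun k => ?_
    rw [show 8 * Real.sqrt μ * Real.cos θ₁
        = (8 * Real.sqrt μ) * Real.cos θ₁ by ring, mul_pow]
    ring
  -- step 3 : outer integral
  have step3 :
      (∫ θ₁ in (0:ℝ)..(2*Real.pi),
          ∑' k, (((8 * Real.sqrt μ) ^ k * W k * W k)) * Real.cos θ₁ ^ k)
        = ∑' k, ((8 * Real.sqrt μ) ^ k * W k * W k) * W k := by
    refine swap_lemma _ (2*Real.pi*(2*Real.pi)) r hr0 hr1 (fun k => ?_)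
    rw [abs_mul, abs_mul, abs_pow,
        abs_of_nonneg (by positivity : (0:ℝ) ≤ 8 * Real.sqrt μ), ← hrdef]
    have hW1 := W_abs k
    have hW0 := abs_nonneg (W k)
    have hrk : (0:ℝ) ≤ r ^ k := pow_nonneg hr0 k
    have hπ2 : (0:ℝ) < 2*Real.pi := by positivity
    nlinarith [mul_le_mul hW1 hW1 hW0 (le_of_lt hπ2),
      mul_le_mul_of_nonneg_left (mul_le_mul hW1 hW1 hW0 (le_of_lt hπ2)) hrk]
  -- assemble
  have e1 : (∫ θ₁ in (0:ℝ)..(2 * Real.pi), ∫ θ₂ in (0:ℝ)..(2 * Real.pi),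
        ∫ θ₃ in (0:ℝ)..(2 * Real.pi),
          1 / (1 - 8 * Real.sqrt μ * Real.cos θ₁ * Real.cos θ₂ * Real.cos θ₃))
      = ∑' k, ((8 * Real.sqrt μ) ^ k * W k * W k) * W k := by
    rw [← step3]
    refine intervalIntegral.integral_congr fun θ₁ _ => ?_
    rw [← step2 θ₁]
    exact intervalIntegral.integral_congr fun θ₂ _ => step1 θ₁ θ₂
  rw [e1, ← tsum_mul_left]
  -- reindex over even indices
  have hinj : Function.Injective (fun m : ℕ => 2 * m) :=
    mul_right_injective₀ (by norm_num : (2:ℕ) ≠ 0)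
  have hsupp : Function.support
      (fun k : ℕ => 1 / (2 * Real.pi) ^ 3 * (((8 * Real.sqrt μ) ^ k * W k * W k) * W k))
        ⊆ Set.range (fun m : ℕ => 2 * m) := by
    intro k hk
    rcases Nat.even_or_odd k with he | ho
    · obtain ⟨m, hm⟩ := he
      exact ⟨m, show 2 * m = k by omega⟩
    · exfalso
      obtain ⟨m, hm⟩ := ho
      apply hk
      simp only [hm, W_odd, mul_zero, zero_mul]
  rw [← Function.Injective.tsum_eq hinj hsupp]
  refine tsum_congr fun m => ?_
  show 1 / (2 * Real.pi) ^ 3 *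
      (((8 * Real.sqrt μ) ^ (2 * m) * W (2 * m) * W (2 * m)) * W (2 * m))
    = (poch (1/2) m / (Nat.factorial m : ℝ)) ^ 3 * (64 * μ) ^ m
  rw [W_even m, poch_div m]
  have hpow : (8 * Real.sqrt μ) ^ (2 * m) = (64 * μ) ^ m := by
    rw [pow_mul]
    congr 1
    rw [mul_pow, Real.sq_sqrt h0]
    ring
  rw [hpow]
  have hπ3 : ((2:ℝ) * Real.pi) ^ 3 ≠ 0 := by positivity
  field_simp
end
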